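/- Let A : H_n → ℝ^m satisfy the S_2-robust rank null space property of order r_* with constants 0 < ρ < 1 and τ > 0 relative to a norm ‖·‖ on ℝ^m, and the S_1-quotient property with constant d and rank r_* relative to the same norm. Then for every v ∈ ℝ^m there exists U ∈ H_n with A U = v and, for every 1 ≤ p ≤ 2, ‖U‖_{S_p} ≤ ((1+ρ) d + τ) r_*^{1/p − 1/2} ‖v‖. -/

import Mathlib

open scoped BigOperators
open Matrix

noncomputable def singVal {n : ℕ} (M : Matrix (Fin n) (Fin n) ℂ) (i : Fin n) : ℝ :=
  Real.sqrt ((Matrix.isHermitian_conjTranspose_mul_self M).eigenvalues i)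

noncomputable def sNorm {n : ℕ} (p : ℝ) (M : Matrix (Fin n) (Fin n) ℂ) : ℝ :=
  (∑ i, singVal M i ^ p) ^ (1 / p)

noncomputable def sNormInf {n : ℕ} (M : Matrix (Fin n) (Fin n) ℂ) : ℝ :=
  ⨆ i, singVal M i

def outer {n : ℕ} (a : Fin n → ℂ) : Matrix (Fin n) (Fin n) ℂ :=
  Matrix.of fun i j => a i * star (a j)

noncomputable def measOp {n m : ℕ} (a : Fin m → Fin n → ℂ)
    (X : Matrix (Fin n) (Fin n) ℂ) : Fin m → ℝ :=
  fun j => ((X * outer (a j)).trace).re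

noncomputable def herTrunc {n : ℕ} (r : ℕ) {X : Matrix (Fin n) (Fin n) ℂ}
    (hX : X.IsHermitian) : Matrix (Fin n) (Fin n) ℂ :=
  (hX.eigenvectorUnitary : Matrix (Fin n) (Fin n) ℂ) *
    (Matrix.diagonal fun i =>
      if (((Tuple.sort fun j => -|hX.eigenvalues j|).symm i : Fin n) : ℕ) < r
        then (hX.eigenvalues i : ℂ) else 0) *
    star (hX.eigenvectorUnitary : Matrix (Fin n) (Fin n) ℂ)

/-! ### Auxiliary lemmas -/

open Polynomial in
theorem aux_charpoly_conj_units {n : ℕ} (U W M : Matrix (Fin n) (Fin n) ℂ)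
    (h1 : U * W = 1) (h2 : W * U = 1) : (U * M * W).charpoly = M.charpoly := by
  unfold Matrix.charpoly Matrix.charmatrix
  have hcomm : ∀ N : Matrix (Fin n) (Fin n) ℂ[X],
      Matrix.scalar (Fin n) (X : ℂ[X]) * N = N * Matrix.scalar (Fin n) X :=
    fun N => (Matrix.scalar_commute (X : ℂ[X]) (fun r => Commute.all _ _) N).eq
  have h1' : U.map (C : ℂ →+* ℂ[X]) * W.map C = 1 := by rw [← Matrix.map_mul, h1]; simp
  have h2' : W.map (C : ℂ →+* ℂ[X]) * U.map C = 1 := by rw [← Matrix.map_mul, h2]; simp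
  have hm : ∀ N : Matrix (Fin n) (Fin n) ℂ, (C : ℂ →+* ℂ[X]).mapMatrix N = N.map C := fun _ => rfl
  have key : Matrix.scalar (Fin n) (X : ℂ[X]) - (C : ℂ →+* ℂ[X]).mapMatrix (U * M * W)
      = U.map C * (Matrix.scalar (Fin n) X - (C : ℂ →+* ℂ[X]).mapMatrix M) * W.map C := by
    rw [hm, hm, Matrix.map_mul, Matrix.map_mul, Matrix.mul_sub, Matrix.sub_mul]
    congr 1
    rw [mul_assoc, hcomm, ← mul_assoc, h1', one_mul]
  rw [key, Matrix.det_mul, Matrix.det_mul, mul_comm, ← mul_assoc, ← Matrix.det_mul, h2',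
    Matrix.det_one, one_mul]

open Polynomial in
theorem aux_charpoly_diag {n : ℕ} (w : Fin n → ℂ) :
    (Matrix.diagonal w).charpoly = ∏ i, (X - C (w i)) := by
  unfold Matrix.charpoly Matrix.charmatrix
  have : Matrix.scalar (Fin n) (X : ℂ[X]) - (C : ℂ →+* ℂ[X]).mapMatrix (Matrix.diagonal w)
      = Matrix.diagonal (fun i => X - C (w i)) := by
    ext i j
    by_cases h : i = j <;> simp [Matrix.scalar_apply, Matrix.diagonal, h]
  rw [this, Matrix.det_diagonal]

open Polynomial in
theorem aux_roots_prod_lin {n : ℕ} (a : Fin n → ℂ) :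
    (∏ i, (X - C (a i))).roots = Multiset.map a Finset.univ.val := by
  rw [← Polynomial.roots_multiset_prod_X_sub_C (Multiset.map a Finset.univ.val)]
  congr 1
  rw [Multiset.map_map]
  rfl

open Polynomial in
theorem aux_eig_multiset {n : ℕ} {B : Matrix (Fin n) (Fin n) ℂ} (hB : B.IsHermitian)
    (V : Matrix.unitaryGroup (Fin n) ℂ) (dv : Fin n → ℝ)
    (hBdef : B = (V : Matrix (Fin n) (Fin n) ℂ) * Matrix.diagonal (fun i => (dv i : ℂ)) *
      star (V : Matrix (Fin n) (Fin n) ℂ)) :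
    Multiset.map hB.eigenvalues Finset.univ.val = Multiset.map dv Finset.univ.val := by
  have h1 : B.charpoly = ∏ i, (X - C ((dv i : ℂ))) := by
    rw [hBdef, aux_charpoly_conj_units _ _ _ (Unitary.mul_star_self_of_mem V.2)
      (Unitary.star_mul_self_of_mem V.2), aux_charpoly_diag]
  have h2 : B.charpoly = ∏ i, (X - C ((hB.eigenvalues i : ℂ))) := by
    conv_lhs => rw [hB.spectral_theorem]
    rw [Unitary.conjStarAlgAut_apply]
    rw [aux_charpoly_conj_units _ _ _ (Unitary.mul_star_self_of_mem hB.eigenvectorUnitary.2)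
      (Unitary.star_mul_self_of_mem hB.eigenvectorUnitary.2)]
    have : (RCLike.ofReal ∘ hB.eigenvalues : Fin n → ℂ) = fun i => (hB.eigenvalues i : ℂ) := rfl
    rw [this, aux_charpoly_diag]
  have h3 := congrArg Polynomial.roots (h2.symm.trans h1)
  rw [aux_roots_prod_lin, aux_roots_prod_lin] at h3
  have h4 : Multiset.map (Complex.ofReal) (Multiset.map hB.eigenvalues Finset.univ.val)
      = Multiset.map (Complex.ofReal) (Multiset.map dv Finset.univ.val) := by
    rw [Multiset.map_map, Multiset.map_map]; exact h3
  exact Multiset.map_injective Complex.ofReal_injective h4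

theorem aux_sum_comp_of_multiset_eq {n : ℕ} {e f : Fin n → ℝ}
    (h : Multiset.map e Finset.univ.val = Multiset.map f Finset.univ.val) (g : ℝ → ℝ) :
    ∑ i, g (e i) = ∑ i, g (f i) := by
  have h2 : Multiset.map (g ∘ e) Finset.univ.val = Multiset.map (g ∘ f) Finset.univ.val := by
    rw [← Multiset.map_map, ← Multiset.map_map, h]
  rw [Finset.sum_eq_multiset_sum, Finset.sum_eq_multiset_sum]
  exact congrArg Multiset.sum h2

theorem aux_sum_g_singVal {n : ℕ} (V : Matrix.unitaryGroup (Fin n) ℂ) (dv : Fin n → ℝ)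
    (g : ℝ → ℝ) :
    ∑ i, g (singVal ((V : Matrix (Fin n) (Fin n) ℂ) * Matrix.diagonal (fun i => (dv i : ℂ)) *
      star (V : Matrix (Fin n) (Fin n) ℂ)) i) = ∑ i, g |dv i| := by
  set Vm : Matrix (Fin n) (Fin n) ℂ := (V : Matrix (Fin n) (Fin n) ℂ) with hVm
  set D : Matrix (Fin n) (Fin n) ℂ := Matrix.diagonal (fun i => (dv i : ℂ)) with hD
  set M : Matrix (Fin n) (Fin n) ℂ := Vm * D * star Vm with hM
  have hDh : Dᴴ = D := by
    rw [hD, Matrix.diagonal_conjTranspose]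
    ext i j
    rcases eq_or_ne i j with h | h <;> simp [Matrix.diagonal_apply, h, Complex.conj_ofReal]
  have hMh : Mᴴ = M := by
    rw [hM, Matrix.conjTranspose_mul, Matrix.conjTranspose_mul, hDh,
      Matrix.star_eq_conjTranspose, Matrix.conjTranspose_conjTranspose]
    exact (mul_assoc _ _ _).symm
  have hMM : Mᴴ * M = Vm * Matrix.diagonal (fun i => ((dv i * dv i : ℝ) : ℂ)) * star Vm := by
    rw [hMh, hM]
    calc Vm * D * star Vm * (Vm * D * star Vm)
        = Vm * (D * (star Vm * Vm) * D) * star Vm := by simp only [mul_assoc]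
      _ = Vm * (D * D) * star Vm := by
          rw [Unitary.star_mul_self_of_mem V.2, mul_one]
      _ = Vm * Matrix.diagonal (fun i => ((dv i * dv i : ℝ) : ℂ)) * star Vm := by
          rw [hD, Matrix.diagonal_mul_diagonal]
          norm_cast
  have hm := aux_eig_multiset (Matrix.isHermitian_conjTranspose_mul_self M) V
    (fun i => dv i * dv i) hMM
  have hmain := aux_sum_comp_of_multiset_eq hm (g ∘ Real.sqrt)
  simp only [Function.comp] at hmain
  calc ∑ i, g (singVal M i) = ∑ i, g (Real.sqrt (dv i * dv i)) := hmain
    _ = ∑ i, g |dv i| := by simp [Real.sqrt_mul_self_eq_abs]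

theorem aux_rpow_add_le_add_rpow {x y z : ℝ} (hx : 0 ≤ x) (hy : 0 ≤ y) (hz0 : 0 ≤ z)
    (hz1 : z ≤ 1) : (x + y) ^ z ≤ x ^ z + y ^ z := by
  lift x to NNReal using hx
  lift y to NNReal using hy
  have := NNReal.rpow_add_le_add_rpow x y hz0 hz1
  exact_mod_cast this

theorem aux_card_filter_fin_lt_le {n r : ℕ} :
    (Finset.univ.filter fun k : Fin n => (k : ℕ) < r).card ≤ r := by
  classical
  rw [← Finset.card_image_of_injective _ Fin.val_injective]
  have hsub : (Finset.univ.filter fun k : Fin n => (k : ℕ) < r).image Fin.val ⊆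
      Finset.range r := by
    intro m hm
    simp only [Finset.mem_image, Finset.mem_filter] at hm
    obtain ⟨k, ⟨_, hk⟩, rfl⟩ := hm
    exact Finset.mem_range.mpr hk
  calc _ ≤ (Finset.range r).card := Finset.card_le_card hsub
    _ = r := Finset.card_range r

theorem aux_card_filter_fin_lt_eq {n r : ℕ} (hrn : r ≤ n) :
    (Finset.univ.filter fun k : Fin n => (k : ℕ) < r).card = r := by
  classical
  rw [← Finset.card_image_of_injective _ Fin.val_injective]
  have heq : (Finset.univ.filter fun k : Fin n => (k : ℕ) < r).image Fin.val =
      Finset.range r := by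
    ext m
    simp only [Finset.mem_image, Finset.mem_filter, Finset.mem_univ, true_and,
      Finset.mem_range]
    constructor
    · rintro ⟨k, hk, rfl⟩; exact hk
    · intro hm
      exact ⟨⟨m, lt_of_lt_of_le hm hrn⟩, hm, rfl⟩
  rw [heq, Finset.card_range]

noncomputable def topSet {n : ℕ} (lam : Fin n → ℝ) (r : ℕ) : Finset (Fin n) :=
  Finset.univ.filter (fun i => (((Tuple.sort fun j => -|lam j|).symm i : Fin n) : ℕ) < r)

theorem topSet_eq_image {n r : ℕ} (lam : Fin n → ℝ) :
    topSet lam r = Finset.image (Tuple.sort fun j => -|lam j|)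
      (Finset.univ.filter fun k : Fin n => (k : ℕ) < r) := by
  classical
  ext i
  simp only [topSet, Finset.mem_filter, Finset.mem_image, Finset.mem_univ, true_and]
  constructor
  · intro h
    exact ⟨(Tuple.sort fun j => -|lam j|).symm i, h, Equiv.apply_symm_apply _ _⟩
  · rintro ⟨k, hk, rfl⟩
    rwa [Equiv.symm_apply_apply]

theorem topSet_card_le {n r : ℕ} (lam : Fin n → ℝ) : (topSet lam r).card ≤ r := by
  rw [topSet_eq_image, Finset.card_image_of_injective _ (Equiv.injective _)]
  exact aux_card_filter_fin_lt_le

theorem topSet_dom {n r : ℕ} (lam : Fin n → ℝ) {j : Fin n} (hj : j ∉ topSet lam r)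
    {i : Fin n} (hi : i ∈ topSet lam r) : |lam j| ≤ |lam i| := by
  classical
  simp only [topSet, Finset.mem_filter, Finset.mem_univ, true_and, not_lt] at hj hi
  have hmono := Tuple.monotone_sort (fun j => -|lam j|)
  have hle : (Tuple.sort fun j => -|lam j|).symm i ≤ (Tuple.sort fun j => -|lam j|).symm j := by
    rw [Fin.le_def]
    exact le_trans (le_of_lt hi) hj
  have := hmono hle
  simp only [Function.comp_apply, Equiv.apply_symm_apply] at this
  linarith

theorem topSet_sum_dom {n r : ℕ} (lam : Fin n → ℝ) {j : Fin n} (hj : j ∉ topSet lam r) :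
    (r : ℝ) * |lam j| ≤ ∑ i ∈ topSet lam r, |lam i| := by
  classical
  have hcard : (topSet lam r).card = r := by
    rw [topSet_eq_image, Finset.card_image_of_injective _ (Equiv.injective _)]
    apply aux_card_filter_fin_lt_eq
    have hjr : r ≤ (((Tuple.sort fun j => -|lam j|).symm j : Fin n) : ℕ) := by
      simp only [topSet, Finset.mem_filter, Finset.mem_univ, true_and, not_lt] at hj
      exact hj
    exact le_trans hjr (le_of_lt (Fin.is_lt _))
  have := Finset.card_nsmul_le_sum (topSet lam r) (fun i => |lam i|) |lam j|
    (fun i hi => topSet_dom lam hj hi)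
  rwa [hcard, nsmul_eq_mul] at this

theorem aux_scalar_main {n : ℕ} (r : ℕ) (hr : 1 ≤ r) (a : Fin n → ℝ) (ha : ∀ i, 0 ≤ a i)
    (S : Finset (Fin n)) (hcard : S.card ≤ r)
    (hdom : ∀ j ∉ S, (r : ℝ) * a j ≤ ∑ i ∈ S, a i)
    (ρ τ N dd : ℝ) (hρ : 0 ≤ ρ) (hτ : 0 ≤ τ) (hN : 0 ≤ N) (hd : 0 ≤ dd)
    (h1 : ∑ i, a i ≤ dd * Real.sqrt r * N)
    (h2 : (∑ i ∈ S, a i ^ (2:ℝ)) ^ (1/2 : ℝ) ≤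
      ρ / Real.sqrt r * (∑ j ∈ Sᶜ, a j) + τ * N)
    (p : ℝ) (hp1 : 1 ≤ p) (hp2 : p ≤ 2) :
    (∑ i, a i ^ p) ^ (1/p : ℝ) ≤ ((1 + ρ) * dd + τ) * (r : ℝ) ^ (1/p - 1/2 : ℝ) * N := by
  have hp0 : 0 < p := lt_of_lt_of_le one_pos hp1
  have hpne : p ≠ 0 := ne_of_gt hp0
  have hpinv : p * (1/p) = 1 := by field_simp
  have hr0 : (0:ℝ) < (r:ℝ) := by exact_mod_cast hr
  have hsq : (0:ℝ) < Real.sqrt r := Real.sqrt_pos.2 hr0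
  have hrhs0 : 0 ≤ ((1 + ρ) * dd + τ) * (r : ℝ) ^ (1/p - 1/2 : ℝ) * N := by
    have : (0:ℝ) ≤ (1 + ρ) * dd + τ := by positivity
    positivity
  set s := ∑ i, a i with hs
  have hs0 : 0 ≤ s := Finset.sum_nonneg fun i _ => ha i
  rcases eq_or_lt_of_le hs0 with hseq | hspos
  · have hz : ∀ i ∈ Finset.univ, a i = 0 := by
      intro i hi
      exact (Finset.sum_eq_zero_iff_of_nonneg (fun i _ => ha i)).mp hseq.symm i hi
    have : ∑ i, a i ^ p = 0 := Finset.sum_eq_zero fun i hi => by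
      rw [hz i hi, Real.zero_rpow hpne]
    rw [this, Real.zero_rpow (by positivity)]
    exact hrhs0
  set B1 := ∑ i ∈ S, a i ^ p with hB1
  set B2 := ∑ i ∈ Sᶜ, a i ^ p with hB2
  have hB1nn : 0 ≤ B1 := Finset.sum_nonneg fun i _ => Real.rpow_nonneg (ha i) p
  have hB2nn : 0 ≤ B2 := Finset.sum_nonneg fun i _ => Real.rpow_nonneg (ha i) p
  have hsplit : ∑ i, a i ^ p = B1 + B2 := (Finset.sum_add_sum_compl S _).symm
  have hsub : (∑ i, a i ^ p) ^ (1/p : ℝ) ≤ B1 ^ (1/p : ℝ) + B2 ^ (1/p : ℝ) := by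
    rw [hsplit]
    exact aux_rpow_add_le_add_rpow hB1nn hB2nn (by positivity)
      (by rw [div_le_one hp0]; linarith)
  have hScompl : ∑ j ∈ Sᶜ, a j ≤ s := by
    rw [hs, ← Finset.sum_add_sum_compl S a]
    have : 0 ≤ ∑ i ∈ S, a i := Finset.sum_nonneg fun i _ => ha i
    linarith
  have hSsum : ∑ i ∈ S, a i ≤ s := by
    rw [hs, ← Finset.sum_add_sum_compl S a]
    have : 0 ≤ ∑ i ∈ Sᶜ, a i := Finset.sum_nonneg fun i _ => ha i
    linarith
  have hA2nn : 0 ≤ ∑ i ∈ S, a i ^ (2:ℝ) :=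
    Finset.sum_nonneg fun i _ => Real.rpow_nonneg (ha i) 2
  have hHolder : B1 ≤ (S.card : ℝ) ^ (1 - p/2 : ℝ) * (∑ i ∈ S, a i ^ (2:ℝ)) ^ (p/2 : ℝ) := by
    have hP : (1:ℝ) ≤ 2 / p := by rw [le_div_iff₀ hp0]; linarith
    have hkey := Real.inner_le_weight_mul_Lp_of_nonneg S (p := 2/p) hP (fun _ => (1:ℝ))
      (fun i => a i ^ p) (fun _ => zero_le_one) (fun i => Real.rpow_nonneg (ha i) p)
    simp only [one_mul] at hkey
    have hinv : (2 / p : ℝ)⁻¹ = p / 2 := by rw [inv_div]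
    rw [hinv] at hkey
    have hpow : ∀ i, (a i ^ p) ^ (2/p : ℝ) = a i ^ (2:ℝ) := by
      intro i
      rw [← Real.rpow_mul (ha i)]
      congr 1
      field_simp
    have hone : ((∑ _i ∈ S, (1:ℝ)) : ℝ) = (S.card : ℝ) := by
      rw [Finset.sum_const, nsmul_eq_mul, mul_one]
    calc B1 ≤ (∑ _i ∈ S, (1:ℝ)) ^ (1 - p/2 : ℝ) * (∑ i ∈ S, (a i ^ p) ^ (2/p : ℝ)) ^ (p/2 : ℝ) :=
          hkey
      _ = (S.card : ℝ) ^ (1 - p/2 : ℝ) * (∑ i ∈ S, a i ^ (2:ℝ)) ^ (p/2 : ℝ) := by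
          rw [hone]
          congr 2
          exact Finset.sum_congr rfl fun i _ => hpow i
  have hB1bound : B1 ^ (1/p : ℝ) ≤
      (r:ℝ) ^ (1/p - 1/2 : ℝ) * (ρ * dd * N + τ * N) := by
    have step1 : B1 ^ (1/p : ℝ) ≤
        ((S.card : ℝ) ^ (1 - p/2 : ℝ)) ^ (1/p : ℝ) *
          ((∑ i ∈ S, a i ^ (2:ℝ)) ^ (p/2 : ℝ)) ^ (1/p : ℝ) := by
      rw [← Real.mul_rpow (by positivity) (by positivity)]
      exact Real.rpow_le_rpow hB1nn hHolder (by positivity)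
    have hexp1 : (1 - p/2 : ℝ) * (1/p) = 1/p - 1/2 := by
      have : (1 - p/2 : ℝ) * (1/p) = 1/p - (p * (1/p))/2 := by ring
      rw [this, hpinv]
    have hexp2 : (p/2 : ℝ) * (1/p) = 1/2 := by
      have : (p/2 : ℝ) * (1/p) = (p * (1/p))/2 := by ring
      rw [this, hpinv]
    have e1 : ((S.card : ℝ) ^ (1 - p/2 : ℝ)) ^ (1/p : ℝ) = (S.card : ℝ) ^ (1/p - 1/2 : ℝ) := by
      rw [← Real.rpow_mul (Nat.cast_nonneg _), hexp1]
    have e2 : ((∑ i ∈ S, a i ^ (2:ℝ)) ^ (p/2 : ℝ)) ^ (1/p : ℝ)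
        = (∑ i ∈ S, a i ^ (2:ℝ)) ^ (1/2 : ℝ) := by
      rw [← Real.rpow_mul hA2nn, hexp2]
    have e3 : (S.card : ℝ) ^ (1/p - 1/2 : ℝ) ≤ (r:ℝ) ^ (1/p - 1/2 : ℝ) := by
      apply Real.rpow_le_rpow (Nat.cast_nonneg _) (by exact_mod_cast hcard)
      have h12 : (1:ℝ)/2 ≤ 1/p := one_div_le_one_div_of_le hp0 hp2
      linarith
    have e4 : (∑ i ∈ S, a i ^ (2:ℝ)) ^ (1/2 : ℝ) ≤ ρ * dd * N + τ * N := by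
      have hc : ∑ j ∈ Sᶜ, a j ≤ dd * Real.sqrt r * N := le_trans hScompl h1
      have hm : ρ / Real.sqrt r * (∑ j ∈ Sᶜ, a j) ≤ ρ / Real.sqrt r * (dd * Real.sqrt r * N) :=
        mul_le_mul_of_nonneg_left hc (by positivity)
      have heq : ρ / Real.sqrt r * (dd * Real.sqrt r * N) = ρ * dd * N := by
        field_simp
      linarith [h2]
    calc B1 ^ (1/p : ℝ) ≤ ((S.card : ℝ) ^ (1 - p/2 : ℝ)) ^ (1/p : ℝ) *
          ((∑ i ∈ S, a i ^ (2:ℝ)) ^ (p/2 : ℝ)) ^ (1/p : ℝ) := step1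
      _ = (S.card : ℝ) ^ (1/p - 1/2 : ℝ) * (∑ i ∈ S, a i ^ (2:ℝ)) ^ (1/2 : ℝ) := by rw [e1, e2]
      _ ≤ (r:ℝ) ^ (1/p - 1/2 : ℝ) * (ρ * dd * N + τ * N) := by
          apply mul_le_mul e3 e4 (by positivity) (by positivity)
  have hB2bound : B2 ^ (1/p : ℝ) ≤ dd * (r:ℝ) ^ (1/p - 1/2 : ℝ) * N := by
    have haj : ∀ j ∈ Sᶜ, a j ≤ s / r := by
      intro j hj
      rw [Finset.mem_compl] at hj
      have hd1 := hdom j hj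
      rw [le_div_iff₀ hr0]
      calc a j * r = r * a j := mul_comm _ _
        _ ≤ ∑ i ∈ S, a i := hd1
        _ ≤ s := hSsum
    have hB2le : B2 ≤ (s / r) ^ (p - 1 : ℝ) * s := by
      have hterm : ∀ j ∈ Sᶜ, a j ^ p ≤ (s / r) ^ (p - 1 : ℝ) * a j := by
        intro j hj
        rcases eq_or_lt_of_le (ha j) with h0 | h0
        · rw [← h0, Real.zero_rpow hpne]
          positivity
        · have hx : a j ^ p = a j ^ (p - 1 : ℝ) * a j := by
            rw [← Real.rpow_add_one (ne_of_gt h0)]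
            ring_nf
          rw [hx]
          apply mul_le_mul_of_nonneg_right _ (ha j)
          exact Real.rpow_le_rpow (le_of_lt h0) (haj j hj) (by linarith)
      calc B2 ≤ ∑ j ∈ Sᶜ, (s / r) ^ (p - 1 : ℝ) * a j := Finset.sum_le_sum hterm
        _ = (s / r) ^ (p - 1 : ℝ) * ∑ j ∈ Sᶜ, a j := by rw [Finset.mul_sum]
        _ ≤ (s / r) ^ (p - 1 : ℝ) * s := mul_le_mul_of_nonneg_left hScompl (by positivity)
    have he : (s / r) ^ (p - 1 : ℝ) * s = s ^ (p : ℝ) * (r:ℝ) ^ (1 - p : ℝ) := by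
      rw [Real.div_rpow hs0 (le_of_lt hr0), div_mul_eq_mul_div,
        ← Real.rpow_add_one (ne_of_gt hspos), sub_add_cancel, div_eq_mul_inv,
        ← Real.rpow_neg (le_of_lt hr0), neg_sub]
    have key : ((s / r) ^ (p - 1 : ℝ) * s) ^ (1/p : ℝ) = s * (r:ℝ) ^ ((1 - p)/p : ℝ) := by
      rw [he, Real.mul_rpow (by positivity) (by positivity),
        ← Real.rpow_mul (le_of_lt hspos), ← Real.rpow_mul (le_of_lt hr0), hpinv,
        Real.rpow_one, mul_one_div]
    have step : B2 ^ (1/p : ℝ) ≤ s * (r:ℝ) ^ ((1 - p)/p : ℝ) := by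
      rw [← key]
      exact Real.rpow_le_rpow hB2nn hB2le (by positivity)
    have final : s * (r:ℝ) ^ ((1 - p)/p : ℝ) ≤ dd * (r:ℝ) ^ (1/p - 1/2 : ℝ) * N := by
      have hstep : s * (r:ℝ) ^ ((1 - p)/p : ℝ) ≤ dd * Real.sqrt r * N * (r:ℝ) ^ ((1 - p)/p : ℝ) :=
        mul_le_mul_of_nonneg_right h1 (by positivity)
      refine le_trans hstep (le_of_eq ?_)
      rw [Real.sqrt_eq_rpow]
      have hmul : (r:ℝ) ^ ((1:ℝ)/2) * (r:ℝ) ^ ((1 - p)/p : ℝ) = (r:ℝ) ^ (1/p - 1/2 : ℝ) := by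
        rw [← Real.rpow_add hr0]
        congr 1
        have hq : ((1:ℝ) - p)/p = 1/p - p * (1/p) := by ring
        rw [hq, hpinv]
        ring
      calc dd * (r:ℝ) ^ ((1:ℝ)/2) * N * (r:ℝ) ^ ((1 - p)/p : ℝ)
          = dd * ((r:ℝ) ^ ((1:ℝ)/2) * (r:ℝ) ^ ((1 - p)/p : ℝ)) * N := by ring
        _ = dd * (r:ℝ) ^ (1/p - 1/2 : ℝ) * N := by rw [hmul]
    exact le_trans step final
  calc (∑ i, a i ^ p) ^ (1/p : ℝ) ≤ B1 ^ (1/p : ℝ) + B2 ^ (1/p : ℝ) := hsub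
    _ ≤ (r:ℝ) ^ (1/p - 1/2 : ℝ) * (ρ * dd * N + τ * N) + dd * (r:ℝ) ^ (1/p - 1/2 : ℝ) * N :=
        add_le_add hB1bound hB2bound
    _ = ((1 + ρ) * dd + τ) * (r : ℝ) ^ (1/p - 1/2 : ℝ) * N := by ring

/-- If A satisfies the S_2-robust rank null space property of order
r_* with constants 0 < ρ < 1, τ > 0 relative to a norm ‖·‖ on ℝ^m, and the
S_1-quotient property with constant d and rank r_* relative to the same norm,
then for every v ∈ ℝ^m there is a Hermitian U with A U = v and, for every
1 ≤ p ≤ 2, ‖U‖_{S_p} ≤ ((1+ρ)d + τ) r_*^{1/p − 1/2} ‖v‖. -/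
theorem nsp_and_qp_give_preimage_bound {n m : ℕ} (rstar : ℕ) (hrstar : 1 ≤ rstar)
    (ρ τ d : ℝ) (hρ0 : 0 < ρ) (hρ1 : ρ < 1) (hτ : 0 < τ) (hd : 0 < d)
    (A : Matrix (Fin n) (Fin n) ℂ → (Fin m → ℝ))
    (Nrm : (Fin m → ℝ) → ℝ) (hN0 : ∀ v, 0 ≤ Nrm v)
    (hNSP : ∀ (X : Matrix (Fin n) (Fin n) ℂ) (hX : X.IsHermitian),
      sNorm 2 (herTrunc rstar hX) ≤
        ρ / Real.sqrt rstar * sNorm 1 (X - herTrunc rstar hX) + τ * Nrm (A X))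
    (hQP : ∀ v : Fin m → ℝ, ∃ U : Matrix (Fin n) (Fin n) ℂ, U.IsHermitian ∧
      A U = v ∧ sNorm 1 U ≤ d * Real.sqrt rstar * Nrm v) :
    ∀ v : Fin m → ℝ, ∃ U : Matrix (Fin n) (Fin n) ℂ, U.IsHermitian ∧ A U = v ∧
      ∀ p : ℝ, 1 ≤ p → p ≤ 2 →
        sNorm p U ≤ ((1 + ρ) * d + τ) * (rstar : ℝ) ^ (1 / p - 1 / 2 : ℝ) * Nrm v := by
  intro v
  obtain ⟨U, hU, hAU, hQb⟩ := hQP v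
  refine ⟨U, hU, hAU, ?_⟩
  classical
  set lam : Fin n → ℝ := hU.eigenvalues with hlam
  set V := hU.eigenvectorUnitary with hV
  set S : Finset (Fin n) := topSet lam rstar with hS
  -- decompositions
  have hU_eq : U = (V : Matrix (Fin n) (Fin n) ℂ) * Matrix.diagonal (fun i => (lam i : ℂ)) *
      star (V : Matrix (Fin n) (Fin n) ℂ) := hU.spectral_theorem
  set dT : Fin n → ℝ :=
    fun i => if (((Tuple.sort fun j => -|lam j|).symm i : Fin n) : ℕ) < rstar
      then lam i else 0 with hdT
  set dC : Fin n → ℝ :=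
    fun i => if (((Tuple.sort fun j => -|lam j|).symm i : Fin n) : ℕ) < rstar
      then 0 else lam i with hdC
  have hT_eq : herTrunc rstar hU = (V : Matrix (Fin n) (Fin n) ℂ) *
      Matrix.diagonal (fun i => (dT i : ℂ)) * star (V : Matrix (Fin n) (Fin n) ℂ) := by
    unfold herTrunc
    have heq : (fun i => if (((Tuple.sort fun j => -|hU.eigenvalues j|).symm i : Fin n) : ℕ)
        < rstar then (hU.eigenvalues i : ℂ) else 0) = fun i => (dT i : ℂ) := by
      funext i
      rw [hdT]
      rw [apply_ite (fun x : ℝ => (x : ℂ))]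
      norm_num
      rfl
    rw [heq]
  have hC_eq : U - herTrunc rstar hU = (V : Matrix (Fin n) (Fin n) ℂ) *
      Matrix.diagonal (fun i => (dC i : ℂ)) * star (V : Matrix (Fin n) (Fin n) ℂ) := by
    rw [hT_eq]
    rw [hU_eq, ← Matrix.sub_mul, ← Matrix.mul_sub]
    have hdd : Matrix.diagonal (fun i => (lam i : ℂ)) - Matrix.diagonal (fun i => (dT i : ℂ))
        = Matrix.diagonal (fun i => (dC i : ℂ)) := by
      rw [Matrix.diagonal_sub, Matrix.diagonal_eq_diagonal_iff]
      intro i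
      simp only [hdT, hdC]
      by_cases h : (((Tuple.sort fun j => -|lam j|).symm i : Fin n) : ℕ) < rstar
      · rw [if_pos h, if_pos h]
        simp
      · rw [if_neg h, if_neg h]
        simp
    rw [hdd]
  -- sum identities
  have hsU : ∀ q : ℝ, ∑ i, singVal U i ^ q = ∑ i, |lam i| ^ q := by
    intro q
    conv_lhs => rw [hU_eq]
    exact aux_sum_g_singVal V lam (fun t => t ^ q)
  have hsT : ∑ i, singVal (herTrunc rstar hU) i ^ (2:ℝ) = ∑ i ∈ S, |lam i| ^ (2:ℝ) := by
    conv_lhs => rw [hT_eq]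
    rw [aux_sum_g_singVal V dT (fun t => t ^ (2:ℝ))]
    rw [hS, topSet, Finset.sum_filter]
    apply Finset.sum_congr rfl
    intro i _
    by_cases h : (((Tuple.sort fun j => -|lam j|).symm i : Fin n) : ℕ) < rstar
    · rw [if_pos h, hdT]
      simp only [if_pos h]
    · rw [if_neg h, hdT]
      simp only [if_neg h, abs_zero]
      rw [Real.zero_rpow (by norm_num)]
  have hsC : ∑ i, singVal (U - herTrunc rstar hU) i ^ (1:ℝ) = ∑ j ∈ Sᶜ, |lam j| := by
    conv_lhs => rw [hC_eq]
    rw [aux_sum_g_singVal V dC (fun t => t ^ (1:ℝ))]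
    have hcompl : Sᶜ = Finset.univ.filter
        (fun i => ¬ (((Tuple.sort fun j => -|lam j|).symm i : Fin n) : ℕ) < rstar) := by
      rw [hS, topSet]
      ext i
      simp
    rw [hcompl, Finset.sum_filter]
    apply Finset.sum_congr rfl
    intro i _
    by_cases h : (((Tuple.sort fun j => -|lam j|).symm i : Fin n) : ℕ) < rstar
    · rw [if_neg (not_not_intro h), hdC]
      simp only [if_pos h, abs_zero]
      rw [Real.rpow_one]
    · rw [if_pos h, hdC]
      simp only [if_neg h]
      rw [Real.rpow_one]
  -- scalar hypotheses
  have hone : sNorm 1 U = ∑ i, |lam i| := by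
    unfold sNorm
    rw [hsU 1]
    rw [show ((1:ℝ)/1) = 1 by norm_num, Real.rpow_one]
    exact Finset.sum_congr rfl fun i _ => Real.rpow_one _
  have h1 : ∑ i, |lam i| ≤ d * Real.sqrt rstar * Nrm v := by
    rw [← hone]; exact hQb
  have hnsp := hNSP U hU
  rw [hAU] at hnsp
  have hsT2 : sNorm 2 (herTrunc rstar hU) = (∑ i ∈ S, |lam i| ^ (2:ℝ)) ^ (1/2 : ℝ) := by
    unfold sNorm
    rw [hsT]
  have hsC2 : sNorm 1 (U - herTrunc rstar hU) = ∑ j ∈ Sᶜ, |lam j| := by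
    unfold sNorm
    rw [hsC, show ((1:ℝ)/1) = 1 by norm_num, Real.rpow_one]
  rw [hsT2, hsC2] at hnsp
  -- conclude
  intro p hp1 hp2
  have hfin := aux_scalar_main rstar hrstar (fun i => |lam i|) (fun i => abs_nonneg _)
    S (by rw [hS]; exact topSet_card_le lam)
    (fun j hj => by rw [hS] at hj ⊢; exact topSet_sum_dom lam hj)
    ρ τ (Nrm v) d (le_of_lt hρ0) (le_of_lt hτ) (hN0 v) (le_of_lt hd)
    h1 hnsp p hp1 hp2
  have hgoal : sNorm p U = (∑ i, |lam i| ^ p) ^ (1/p : ℝ) := by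
    unfold sNorm
    rw [hsU p]
  rw [hgoal]
  exact hfin
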